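/- If all agents' Leontief valuations v_{i,x} are natural numbers, then the unique equilibrium aggregate distribution delta* and the corresponding utility profile u* are rational-valued. -/

import Mathlib

def IsStrategy (n m : ℕ) (d : Fin m → ℝ) : Prop :=
  (∀ x, 0 ≤ d x) ∧ ∑ x, d x = 1 / n

def IsNash (n m : ℕ) (u : Fin n → (Fin m → ℝ) → ℝ) (δ : Fin n → Fin m → ℝ) : Prop :=
  (∀ i, IsStrategy n m (δ i)) ∧
  ∀ i, ∀ d, IsStrategy n m d →
    u i ((∑ j, δ j) - δ i + d) ≤ u i (∑ j, δ j)

noncomputable def Apos {n m : ℕ} (v : Fin n → Fin m → ℝ) (i : Fin n) : Finset (Fin m) :=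
  Finset.univ.filter (fun x => 0 < v i x)

noncomputable def leontief {n m : ℕ} (v : Fin n → Fin m → ℝ)
    (h : ∀ i, (Apos v i).Nonempty) (i : Fin n) (d : Fin m → ℝ) : ℝ :=
  (Apos v i).inf' (h i) (fun x => d x / v i x)

theorem nash_support (n m : ℕ)
    (v : Fin n → Fin m → ℕ)
    (hpos : ∀ i, (Apos (fun i x => (v i x : ℝ)) i).Nonempty)
    (δ : Fin n → Fin m → ℝ)
    (hNE : IsNash n m (leontief (fun i x => (v i x : ℝ)) hpos) δ)
    (i : Fin n) (x0 : Fin m) (hx0 : 0 < δ i x0) :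
    0 < v i x0 ∧
      (∑ j, δ j) x0 =
        leontief (fun i x => (v i x : ℝ)) hpos i (∑ j, δ j) * (v i x0 : ℝ) := by
  classical
  set W : Fin n → Fin m → ℝ := fun i x => (v i x : ℝ) with hW
  set S : Fin m → ℝ := ∑ j, δ j with hS
  set u : ℝ := leontief W hpos i S with hu
  have hmem : ∀ x : Fin m, x ∈ Apos W i ↔ 0 < v i x := by
    intro x; simp [Apos, hW, Nat.cast_pos]
  have hSx : ∀ x, S x = ∑ j, δ j x := by
    intro x; simp [hS, Finset.sum_apply]
  -- basic: δ j x ≥ 0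
  have hdnn : ∀ j x, 0 ≤ δ j x := fun j x => ((hNE.1 j).1 x)
  have hSnn : ∀ x, 0 ≤ S x := by
    intro x; rw [hSx]; exact Finset.sum_nonneg fun j _ => hdnn j x
  have hule : ∀ x, x ∈ Apos W i → u ≤ S x / (v i x : ℝ) :=
    fun x hx => Finset.inf'_le _ hx
  -- binding set
  set B : Finset (Fin m) := (Apos W i).filter (fun x => S x / (W i x) = u) with hB
  obtain ⟨xb, hxbmem, hxbeq⟩ := Finset.exists_mem_eq_inf' (hpos i) (fun x => S x / W i x)
  have hBne : B.Nonempty := ⟨xb, Finset.mem_filter.2 ⟨hxbmem, hxbeq.symm⟩⟩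
  set VB : ℝ := ∑ x ∈ B, (v i x : ℝ) with hVB
  have hVBpos : 0 < VB := by
    rw [hVB]
    apply Finset.sum_pos
    · intro x hx
      have := (hmem x).1 (Finset.mem_filter.1 hx).1
      exact_mod_cast this
    · exact hBne
  by_contra hcon
  -- from hcon: x0 ∉ B
  have hx0B : x0 ∉ B := by
    intro h
    have h1 := Finset.mem_filter.1 h
    have hv : 0 < v i x0 := (hmem x0).1 h1.1
    refine hcon ⟨hv, ?_⟩
    have hvr : (0:ℝ) < (v i x0 : ℝ) := by exact_mod_cast hv
    have := h1.2
    field_simp [hW] at this ⊢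
    have h2 : S x0 / (v i x0 : ℝ) = u := this
    rw [div_eq_iff hvr.ne'] at h2
    linarith [h2]
  -- gap
  set gap : ℝ := if x0 ∈ Apos W i then S x0 - u * (v i x0 : ℝ) else 1 with hgap
  have hgappos : 0 < gap := by
    rw [hgap]
    split_ifs with h
    · have hvr : (0:ℝ) < (v i x0 : ℝ) := by exact_mod_cast (hmem x0).1 h
      have hle := hule x0 h
      have hne : S x0 / (W i x0) ≠ u := by
        intro heq
        exact hx0B (Finset.mem_filter.2 ⟨h, heq⟩)
      have hlt : u < S x0 / (v i x0 : ℝ) := lt_of_le_of_ne hle (Ne.symm hne)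
      have := (lt_div_iff₀ hvr).1 hlt
      linarith
    · norm_num
  set ε : ℝ := min (δ i x0) gap / 2 with hε
  have hεpos : 0 < ε := by positivity
  have hεle : ε ≤ δ i x0 := by
    have : min (δ i x0) gap ≤ δ i x0 := min_le_left _ _
    rw [hε]; linarith [lt_min hx0 hgappos]
  have hεgap : ε < gap := by
    have h1 : min (δ i x0) gap ≤ gap := min_le_right _ _
    rw [hε]; linarith [lt_min hx0 hgappos]
  -- deviation
  set d : Fin m → ℝ := fun x =>
    δ i x + (if x ∈ B then ε * (v i x : ℝ) / VB else 0) - (if x = x0 then ε else 0) with hd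
  have hdstrat : IsStrategy n m d := by
    constructor
    · intro x
      rw [hd]
      by_cases h1 : x = x0
      · subst h1
        simp [hx0B]
        linarith
      · have : (if x = x0 then ε else 0) = 0 := by simp [h1]
        simp only [this]
        split_ifs with h2
        · have hv : (0:ℝ) ≤ (v i x : ℝ) := by positivity
          have := hdnn i x
          have : 0 ≤ ε * (v i x : ℝ) / VB := by positivity
          linarith [hdnn i x]
        · simpa using hdnn i x
    · have hsum1 : ∑ x, δ i x = 1 / (n:ℝ) := (hNE.1 i).2
      rw [hd]
      rw [Finset.sum_sub_distrib, Finset.sum_add_distrib]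
      have e1 : ∑ x, (if x ∈ B then ε * (v i x : ℝ) / VB else 0) = ε := by
        rw [Finset.sum_ite_mem, Finset.univ_inter]
        rw [← Finset.sum_div, ← Finset.mul_sum, ← hVB]
        field_simp
      have e2 : ∑ x : Fin m, (if x = x0 then ε else 0) = ε := by simp
      rw [e1, e2, hsum1]; ring
  -- new aggregate
  have hagg : ∀ x, ((∑ j, δ j) - δ i + d) x =
      S x + (if x ∈ B then ε * (v i x : ℝ) / VB else 0) - (if x = x0 then ε else 0) := by
    intro x
    simp only [Pi.add_apply, Pi.sub_apply, hd, ← hS]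
    ring
  -- the new utility is > u, contradiction
  have hgt : u < leontief W hpos i ((∑ j, δ j) - δ i + d) := by
    rw [leontief]
    rw [Finset.lt_inf'_iff]
    intro x hx
    have hv : 0 < v i x := (hmem x).1 hx
    have hvr : (0:ℝ) < (v i x : ℝ) := by exact_mod_cast hv
    rw [hagg x]
    by_cases h1 : x ∈ B
    · have hxne : x ≠ x0 := fun h => hx0B (h ▸ h1)
      have heq : S x / (W i x) = u := (Finset.mem_filter.1 h1).2
      simp only [h1, if_true, hxne, if_false]
      rw [lt_div_iff₀ hvr]
      have : S x = u * (v i x : ℝ) := by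
        field_simp [hW] at heq
        have h2 : S x / (v i x : ℝ) = u := heq
        rw [div_eq_iff hvr.ne'] at h2
        linarith
      rw [this]
      have : 0 < ε * (v i x:ℝ) / VB := by positivity
      linarith
    · by_cases h2 : x = x0
      · subst h2
        simp only [h1, if_false, if_true]
        rw [lt_div_iff₀ hvr]
        have : gap = S x - u * (v i x : ℝ) := by rw [hgap, if_pos hx]
        linarith
      · simp only [h1, h2, if_false]
        have hle := hule x hx
        have hne : S x / (W i x) ≠ u := by
          intro heq
          exact h1 (Finset.mem_filter.2 ⟨hx, heq⟩)
        have : u < S x / (v i x : ℝ) := lt_of_le_of_ne hle (Ne.symm hne)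
        simpa using this
  have := hNE.2 i d hdstrat
  rw [← hu] at this
  exact absurd this (not_le.2 hgt)

theorem leontief_equilibrium_rational
    (n m : ℕ) (hn : 0 < n)
    (v : Fin n → Fin m → ℕ)
    (hpos : ∀ i, (Apos (fun i x => (v i x : ℝ)) i).Nonempty)
    (δ : Fin n → Fin m → ℝ)
    (hNE : IsNash n m (leontief (fun i x => (v i x : ℝ)) hpos) δ) :
    (∀ x, ∃ q : ℚ, (∑ i, δ i x) = (q : ℝ)) ∧
    (∀ i, ∃ q : ℚ,
      leontief (fun i x => (v i x : ℝ)) hpos i (∑ j, δ j) = (q : ℝ)) := by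
  classical
  set S : Fin m → ℝ := fun x => ∑ j, δ j x with hS
  have hSx : ∀ x, (∑ j, δ j) x = S x := by
    intro x; simp [hS, Finset.sum_apply]
  have key := nash_support n m v hpos δ hNE
  have hdnn : ∀ j x, 0 ≤ δ j x := fun j x => ((hNE.1 j).1 x)
  have hSnn : ∀ x, 0 ≤ S x := fun x => Finset.sum_nonneg fun j _ => hdnn j x
  -- the step relation in the support graph
  set step : Fin m → Fin m → Prop := fun a b => ∃ i, 0 < δ i a ∧ 0 < δ i b with hstep
  -- Part 1: aggregate is rational
  have part1 : ∀ x, ∃ q : ℚ, S x = (q : ℝ) := by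
    intro x0
    rcases eq_or_lt_of_le (hSnn x0) with h0 | hpos0
    · exact ⟨0, by simp [← h0]⟩
    set R : Fin m → Prop := fun y => Relation.ReflTransGen step x0 y with hR
    have hprop : ∀ y, R y → ∃ q : ℚ, S y = (q : ℝ) * S x0 := by
      intro y hy
      induction hy with
      | refl => exact ⟨1, by simp⟩
      | @tail b c hab hbc ih =>
        obtain ⟨q, hq⟩ := ih
        obtain ⟨i, hib, hic⟩ := hbc
        obtain ⟨hvb, hSb⟩ := key i b hib
        obtain ⟨hvc, hSc⟩ := key i c hic
        rw [hSx] at hSb hSc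
        have hvbr : (0:ℝ) < (v i b : ℝ) := by exact_mod_cast hvb
        refine ⟨q * (v i c : ℚ) / (v i b : ℚ), ?_⟩
        have hcomb : S c * (v i b : ℝ) = S b * (v i c : ℝ) := by
          rw [hSb, hSc]; ring
        have hvbq : ((v i b : ℚ) : ℝ) ≠ 0 := by exact_mod_cast hvbr.ne'
        push_cast
        rw [div_mul_eq_mul_div, eq_div_iff (by exact_mod_cast hvbr.ne')]
        rw [hq] at hcomb
        push_cast at hcomb ⊢
        linarith [hcomb]
    set q : Fin m → ℚ := fun y => if h : R y then (hprop y h).choose else 0 with hqdef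
    have hq : ∀ y, R y → S y = (q y : ℝ) * S x0 := by
      intro y hy
      simp only [hqdef, dif_pos hy]
      exact (hprop y hy).choose_spec
    set C : Finset (Fin m) := Finset.univ.filter R with hC
    have hCmem : ∀ y, y ∈ C ↔ R y := by intro y; simp [hC]
    have hx0C : x0 ∈ C := (hCmem x0).2 Relation.ReflTransGen.refl
    have hclosed : ∀ i y z, y ∈ C → 0 < δ i y → 0 < δ i z → z ∈ C := by
      intro i y z hy hiy hiz
      exact (hCmem z).2 (Relation.ReflTransGen.tail ((hCmem y).1 hy) ⟨i, hiy, hiz⟩)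
    set A : Finset (Fin n) := Finset.univ.filter (fun i => ∃ y ∈ C, 0 < δ i y) with hA
    -- money conservation
    have hmoney : ∑ y ∈ C, S y = (A.card : ℝ) / n := by
      have h1 : ∑ y ∈ C, S y = ∑ i, ∑ y ∈ C, δ i y := by
        rw [Finset.sum_comm]
      rw [h1]
      have h2 : ∀ i : Fin n, ∑ y ∈ C, δ i y = if i ∈ A then 1 / (n:ℝ) else 0 := by
        intro i
        split_ifs with hiA
        · obtain ⟨y, hyC, hiy⟩ := by simpa [hA] using hiA
          have : ∑ y ∈ C, δ i y = ∑ y, δ i y := by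
            apply Finset.sum_subset (Finset.subset_univ C)
            intro z _ hz
            by_contra hne
            have : 0 < δ i z := lt_of_le_of_ne (hdnn i z) (Ne.symm hne)
            exact hz (hclosed i y z hyC hiy this)
          rw [this, (hNE.1 i).2]
        · apply Finset.sum_eq_zero
          intro y hy
          by_contra hne
          have hp : 0 < δ i y := lt_of_le_of_ne (hdnn i y) (Ne.symm hne)
          exact hiA (by simp [hA]; exact ⟨y, hy, hp⟩)
      rw [Finset.sum_congr rfl (fun i _ => h2 i)]
      rw [Finset.sum_ite_mem, Finset.univ_inter, Finset.sum_const]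
      simp [div_eq_mul_inv]
    -- sum over the component in terms of q
    set Q : ℚ := ∑ y ∈ C, q y with hQ
    have hsumQ : ∑ y ∈ C, S y = (Q : ℝ) * S x0 := by
      rw [hQ]
      push_cast
      rw [Finset.sum_mul]
      apply Finset.sum_congr rfl
      intro y hy
      exact hq y ((hCmem y).1 hy)
    have hqnn : ∀ y ∈ C, (0:ℝ) ≤ (q y : ℝ) := by
      intro y hy
      have := hq y ((hCmem y).1 hy)
      nlinarith [hSnn y]
    have hqx0 : (q x0 : ℝ) = 1 := by
      have := hq x0 Relation.ReflTransGen.refl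
      nlinarith
    have hQpos : (0:ℝ) < (Q : ℝ) := by
      have : (1:ℝ) ≤ ∑ y ∈ C, (q y : ℝ) := by
        calc (1:ℝ) = (q x0 : ℝ) := hqx0.symm
        _ ≤ ∑ y ∈ C, (q y : ℝ) := Finset.single_le_sum hqnn hx0C
      rw [hQ]; push_cast
      linarith
    have hnR : (0:ℝ) < (n:ℝ) := by exact_mod_cast hn
    refine ⟨(A.card : ℚ) / (n * Q), ?_⟩
    have heq : (Q : ℝ) * S x0 = (A.card : ℝ) / n := by rw [← hsumQ, hmoney]
    push_cast
    field_simp at heq ⊢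
    nlinarith [heq]
  constructor
  · intro x
    obtain ⟨qq, hqq⟩ := part1 x
    exact ⟨qq, hqq⟩
  · intro i
    -- find an issue funded by i
    have hsum1 : ∑ x, δ i x = 1 / (n:ℝ) := (hNE.1 i).2
    have hex : ∃ x, 0 < δ i x := by
      by_contra h
      push_neg at h
      have : ∑ x, δ i x = 0 := Finset.sum_eq_zero fun x _ => le_antisymm (h x) (hdnn i x)
      rw [hsum1] at this
      have : (0:ℝ) < 1 / n := by positivity
      linarith
    obtain ⟨x, hx⟩ := hex
    obtain ⟨hv, hSeq⟩ := key i x hx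
    obtain ⟨qq, hqq⟩ := part1 x
    rw [hSx] at hSeq
    have hvr : (0:ℝ) < (v i x : ℝ) := by exact_mod_cast hv
    refine ⟨qq / (v i x : ℚ), ?_⟩
    push_cast
    rw [eq_div_iff hvr.ne', ← hqq]
    exact hSeq.symm
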